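/- Let 0 < γ < γ' < 1 and let T be a nonnegative integer with γ²(1−γ)^s ≤ (γ')²(1−γ')^s for all s ≤ T and γ²(1−γ)^s ≥ (γ')²(1−γ')^s for all s > T. Then ∑_{s=0}^∞ |γ²(1−γ)^s − (γ')²(1−γ')^s| = γ' − γ − 2γ'(1−γ')^{T+1} + 2γ(1−γ)^{T+1}. -/

import Mathlib

lemma aux_summable (a : ℝ) (h0 : 0 < a) (h1 : a < 1) :
    Summable (fun s : ℕ => a ^ 2 * (1 - a) ^ s) := by
  apply Summable.mul_left
  apply summable_geometric_of_lt_one (by linarith) (by linarith)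

lemma aux_tail (a : ℝ) (h0 : 0 < a) (h1 : a < 1) (n : ℕ) :
    ∑' s : ℕ, a ^ 2 * (1 - a) ^ (s + n) = a * (1 - a) ^ n := by
  have : (fun s : ℕ => a ^ 2 * (1 - a) ^ (s + n))
      = fun s : ℕ => (a ^ 2 * (1 - a) ^ n) * (1 - a) ^ s := by
    funext s; rw [pow_add]; ring
  rw [this, tsum_mul_left, tsum_geometric_of_lt_one (by linarith) (by linarith)]
  field_simp
  rw [sub_sub_cancel, mul_div_cancel_left₀ _ (ne_of_gt h0)]

lemma aux_fin (a : ℝ) (h0 : 0 < a) (h1 : a < 1) (n : ℕ) :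
    ∑ s ∈ Finset.range n, a ^ 2 * (1 - a) ^ s = a * (1 - (1 - a) ^ n) := by
  rw [← Finset.mul_sum, geom_sum_eq (by intro h; linarith : (1:ℝ) - a ≠ 1)]
  have h2 : (1 - a) - 1 = -a := by ring
  rw [h2]
  have ha : a ≠ 0 := ne_of_gt h0
  field_simp
  ring

/-- Exact evaluation of the series ∑_{s=0}^∞ |γ²(1−γ)^s − (γ')²(1−γ')^s|
given a crossing index T. -/
theorem stmt_14 (γ γ' : ℝ) (hγ : 0 < γ) (hγγ' : γ < γ') (hγ' : γ' < 1)
    (T : ℕ)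
    (hle : ∀ s : ℕ, s ≤ T → γ ^ 2 * (1 - γ) ^ s ≤ γ' ^ 2 * (1 - γ') ^ s)
    (hge : ∀ s : ℕ, T < s → γ' ^ 2 * (1 - γ') ^ s ≤ γ ^ 2 * (1 - γ) ^ s) :
    ∑' s : ℕ, |γ ^ 2 * (1 - γ) ^ s - γ' ^ 2 * (1 - γ') ^ s|
      = γ' - γ - 2 * γ' * (1 - γ') ^ (T + 1) + 2 * γ * (1 - γ) ^ (T + 1) := by
  have hγ1 : γ < 1 := lt_trans hγγ' hγ'
  have hγ'0 : 0 < γ' := lt_trans hγ hγγ'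
  have hf := aux_summable γ hγ hγ1
  have hg := aux_summable γ' hγ'0 hγ'
  have habs : Summable (fun s : ℕ => |γ ^ 2 * (1 - γ) ^ s - γ' ^ 2 * (1 - γ') ^ s|) :=
    (hf.sub hg).abs
  rw [← Summable.sum_add_tsum_nat_add (T + 1) habs]
  have h1 : ∑ s ∈ Finset.range (T + 1), |γ ^ 2 * (1 - γ) ^ s - γ' ^ 2 * (1 - γ') ^ s|
      = ∑ s ∈ Finset.range (T + 1), (γ' ^ 2 * (1 - γ') ^ s - γ ^ 2 * (1 - γ) ^ s) := by
    apply Finset.sum_congr rfl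
    intro s hs
    rw [abs_of_nonpos (by linarith [hle s (Nat.lt_succ_iff.mp (Finset.mem_range.mp hs))])]
    ring
  have h2 : ∑' s : ℕ, |γ ^ 2 * (1 - γ) ^ (s + (T + 1)) - γ' ^ 2 * (1 - γ') ^ (s + (T + 1))|
      = ∑' s : ℕ, (γ ^ 2 * (1 - γ) ^ (s + (T + 1)) - γ' ^ 2 * (1 - γ') ^ (s + (T + 1))) := by
    apply tsum_congr
    intro s
    exact abs_of_nonneg (by linarith [hge (s + (T + 1)) (by omega)])
  rw [h1, h2, Finset.sum_sub_distrib,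
    Summable.tsum_sub ((summable_nat_add_iff (T + 1)).mpr hf) ((summable_nat_add_iff (T + 1)).mpr hg),
    aux_fin γ' hγ'0 hγ', aux_fin γ hγ hγ1, aux_tail γ hγ hγ1, aux_tail γ' hγ'0 hγ']
  ring
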